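/- Let f : [1, ∞) → ℂ be locally integrable and suppose there exist constants C > 0 and x₀ ≥ 1 such that x (log x) |f(x)| ≤ C for almost every x > x₀. Then s(u) := ∫₁ᵘ f(x) dx is slowly oscillating with respect to (L,1) summability: for every ε > 0 there exist t₀ > 1 and λ > 1 such that |s(u) − s(t)| ≤ ε whenever t₀ ≤ t < u ≤ t^λ. -/

import Mathlib

open Filter MeasureTheory Set

theorem two_sided_tauberian_condition
    (f : ℝ → ℂ) (hf : ∀ t : ℝ, IntegrableOn f (Icc 1 t))
    (C x₀ : ℝ) (hC : 0 < C) (hx₀ : 1 ≤ x₀)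
    (hcond : ∀ᵐ x : ℝ, x₀ < x → x * Real.log x * ‖f x‖ ≤ C)
    (s : ℝ → ℂ) (hsdef : ∀ u : ℝ, s u = ∫ x in (1:ℝ)..u, f x) :
    ∀ ε > (0:ℝ), ∃ t₀ > (1:ℝ), ∃ l > (1:ℝ),
      ∀ t u : ℝ, t₀ ≤ t → t < u → u ≤ t ^ l → ‖s u - s t‖ ≤ ε := by
  intro ε hε
  have hεC : 0 < ε / C := div_pos hε hC
  refine ⟨x₀ + 1, by linarith, Real.exp (ε / C), ?_, ?_⟩
  · rw [show (1:ℝ) = Real.exp 0 by simp]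
    exact Real.exp_lt_exp.mpr hεC
  intro t u ht htu hul
  have h1t : 1 < t := by linarith
  have h1u : 1 < u := lt_trans h1t htu
  have hlogt : 0 < Real.log t := Real.log_pos h1t
  have hlogu : 0 < Real.log u := Real.log_pos h1u
  -- interval integrability of f
  have hii : ∀ v : ℝ, 1 ≤ v → IntervalIntegrable f volume 1 v := fun v hv =>
    ((hf v).mono_set (by rw [uIcc_of_le hv])).intervalIntegrable
  -- s u - s t = ∫ t..u f
  have hsub : s u - s t = ∫ x in t..u, f x := by
    rw [hsdef u, hsdef t]
    exact intervalIntegral.integral_interval_sub_left (hii u h1u.le) (hii t h1t.le)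
  -- the bounding function
  set g : ℝ → ℝ := fun x => C / (x * Real.log x) with hg
  have hgcont : ContinuousOn g (uIcc t u) := by
    rw [uIcc_of_le htu.le]
    apply ContinuousOn.div continuousOn_const
    · exact (continuousOn_id).mul (Real.continuousOn_log.mono (fun x hx => by
        intro h; rw [mem_singleton_iff] at h; subst h; simp at hx; linarith))
    · intro x hx
      have hx1 : 1 < x := lt_of_lt_of_le h1t hx.1
      have : 0 < Real.log x := Real.log_pos hx1
      positivity
  have hgint : IntervalIntegrable g volume t u := hgcont.intervalIntegrable
  -- a.e. bound
  have hbound : ∀ᵐ x ∂volume.restrict (Set.uIoc t u), ‖f x‖ ≤ g x := by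
    rw [uIoc_of_le htu.le]
    rw [ae_restrict_iff' measurableSet_Ioc]
    filter_upwards [hcond] with x hx hxm
    have hx1 : 1 < x := lt_of_lt_of_le h1t hxm.1.le
    have hxx0 : x₀ < x := by linarith [hxm.1]
    have hpos : 0 < x * Real.log x := by
      have := Real.log_pos hx1
      positivity
    have := hx hxx0
    rw [hg]
    rw [le_div_iff₀ hpos]
    calc ‖f x‖ * (x * Real.log x) = x * Real.log x * ‖f x‖ := by
          ring
      _ ≤ C := this
  have hnorm : ‖∫ x in t..u, f x‖ ≤ |∫ x in t..u, g x| :=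
    intervalIntegral.norm_integral_le_abs_of_norm_le hbound hgint
  -- compute the integral of g
  have hderiv : ∀ x ∈ uIcc t u,
      HasDerivAt (fun y => C * Real.log (Real.log y)) (g x) x := by
    intro x hx
    rw [uIcc_of_le htu.le] at hx
    have hx1 : 1 < x := lt_of_lt_of_le h1t hx.1
    have hx0 : (0:ℝ) < x := by linarith
    have hlx : Real.log x ≠ 0 := ne_of_gt (Real.log_pos hx1)
    have h1 : HasDerivAt Real.log x⁻¹ x := Real.hasDerivAt_log (ne_of_gt hx0)
    have h2 : HasDerivAt (fun y => Real.log (Real.log y)) ((Real.log x)⁻¹ * x⁻¹) x :=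
      (Real.hasDerivAt_log hlx).comp x h1
    have h3 := h2.const_mul C
    convert h3 using 1
    show C / (x * Real.log x) = C * ((Real.log x)⁻¹ * x⁻¹)
    ring
    all_goals rfl
  have hcalc : (∫ x in t..u, g x) =
      C * Real.log (Real.log u) - C * Real.log (Real.log t) :=
    intervalIntegral.integral_eq_sub_of_hasDerivAt hderiv hgint
  -- bound the log difference
  have hlogle : Real.log u ≤ Real.exp (ε / C) * Real.log t := by
    calc Real.log u ≤ Real.log (t ^ Real.exp (ε / C)) :=
          Real.log_le_log (lt_trans one_pos h1u) hul
      _ = Real.exp (ε / C) * Real.log t := Real.log_rpow (by linarith) _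
  have hfinal : C * Real.log (Real.log u) - C * Real.log (Real.log t) ≤ ε := by
    have h1 : Real.log (Real.log u) ≤ Real.log (Real.exp (ε / C) * Real.log t) :=
      Real.log_le_log hlogu hlogle
    rw [Real.log_mul (Real.exp_ne_zero _) (ne_of_gt hlogt), Real.log_exp] at h1
    have : Real.log (Real.log u) - Real.log (Real.log t) ≤ ε / C := by linarith
    calc C * Real.log (Real.log u) - C * Real.log (Real.log t)
        = C * (Real.log (Real.log u) - Real.log (Real.log t)) := by ring
      _ ≤ C * (ε / C) := by nlinarith
      _ = ε := by field_simp
  have hgnn : 0 ≤ (∫ x in t..u, g x) := by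
    rw [hcalc]
    have : Real.log (Real.log t) ≤ Real.log (Real.log u) :=
      Real.log_le_log hlogt (Real.log_le_log (lt_trans one_pos h1t) htu.le)
    nlinarith
  calc ‖s u - s t‖ = ‖∫ x in t..u, f x‖ := by rw [hsub]
    _ ≤ |∫ x in t..u, g x| := hnorm
    _ = ∫ x in t..u, g x := abs_of_nonneg hgnn
    _ ≤ ε := by rw [hcalc]; exact hfinal
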